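/- For every real m×n matrix M, the infimum over all m×m real positive definite matrices Γ of ½ (tr(Mᵀ Γ⁻¹ M) + tr(Γ)) equals tr((M Mᵀ)^{1/2}); that is, sInf { ½ (tr(Mᵀ Γ⁻¹ M) + tr(Γ)) : Γ positive definite } = tr((M Mᵀ)^{1/2}). -/

import Mathlib

set_option maxHeartbeats 1000000

open Matrix

/-- Over `ℝ`, `M * Mᵀ` is positive semidefinite. -/
theorem posSemidef_self_mul_transpose {m n : ℕ} (M : Matrix (Fin m) (Fin n) ℝ) :
    (M * Mᵀ).PosSemidef := by
  simpa [Matrix.conjTranspose_eq_transpose_of_trivial] using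
    Matrix.posSemidef_self_mul_conjTranspose M

/-- The square root of a positive semidefinite matrix, as `Matrix.PosSemidef.sqrt` was defined
in the older Mathlib (removed since). -/
noncomputable def Matrix.PosSemidef.sqrt {n : Type*} [Fintype n] [DecidableEq n]
    {A : Matrix n n ℝ} (hA : A.PosSemidef) : Matrix n n ℝ :=
  hA.1.eigenvectorUnitary.1 * diagonal ((↑) ∘ (√·) ∘ hA.1.eigenvalues) *
    (star hA.1.eigenvectorUnitary : Matrix n n ℝ)

theorem Matrix.PosSemidef.sqrt_mul_self {n : Type*} [Fintype n] [DecidableEq n]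
    {A : Matrix n n ℝ} (hA : A.PosSemidef) : hA.sqrt * hA.sqrt = A := by
  have hU : (star hA.1.eigenvectorUnitary : Matrix n n ℝ) * hA.1.eigenvectorUnitary.1 = 1 :=
    Unitary.coe_star_mul_self _
  conv_rhs => rw [hA.1.spectral_theorem, Unitary.conjStarAlgAut_apply]
  unfold Matrix.PosSemidef.sqrt
  have e : ∀ X Y Z W : Matrix n n ℝ, X * Y * Z * (X * Y * Z) = X * Y * (Z * X) * Y * Z := by
    intro X Y Z W; simp only [Matrix.mul_assoc]
  rw [e _ _ _ 0, hU, Matrix.mul_one, Matrix.mul_assoc _ (diagonal _) (diagonal _),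
    diagonal_mul_diagonal]
  congr 3
  funext i
  simp [Real.mul_self_sqrt (hA.eigenvalues_nonneg i)]

theorem Matrix.PosSemidef.posSemidef_sqrt {n : Type*} [Fintype n] [DecidableEq n]
    {A : Matrix n n ℝ} (hA : A.PosSemidef) : hA.sqrt.PosSemidef := by
  unfold Matrix.PosSemidef.sqrt
  have hD : (diagonal ((↑) ∘ (√·) ∘ hA.1.eigenvalues) : Matrix n n ℝ).PosSemidef :=
    posSemidef_diagonal_iff.mpr fun i => by simp [Real.sqrt_nonneg]
  have := hD.mul_mul_conjTranspose_same (hA.1.eigenvectorUnitary : Matrix n n ℝ)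
  simpa [Matrix.star_eq_conjTranspose] using this

private lemma psd_trace_nonneg' {k : ℕ} {A : Matrix (Fin k) (Fin k) ℝ} (hA : A.PosSemidef) :
    0 ≤ A.trace := by
  exact hA.trace_nonneg

private lemma trace_mul_psd_nonneg' {k : ℕ} {B A : Matrix (Fin k) (Fin k) ℝ}
    (hB : B.PosSemidef) (hA : A.PosSemidef) : 0 ≤ (B * A).trace := by
  have hC : hB.sqrt * hB.sqrt = B := hB.sqrt_mul_self
  set C := hB.sqrt with hCdef
  have hCs : C.PosSemidef := hB.posSemidef_sqrt
  have h1 : (B * A).trace = (C * A * C).trace := by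
    rw [← hC, Matrix.mul_assoc, Matrix.trace_mul_comm]
  rw [h1]
  have hherm : Cᴴ = C := hCs.isHermitian
  have : (Cᴴ * A * C).PosSemidef := hA.conjTranspose_mul_mul_same C
  rw [hherm] at this
  exact psd_trace_nonneg' this

private lemma psd_transpose_eq {k : ℕ} {A : Matrix (Fin k) (Fin k) ℝ} (hA : A.PosSemidef) :
    Aᵀ = A := by
  have h : Aᴴ = A := hA.isHermitian
  rwa [Matrix.conjTranspose_eq_transpose_of_trivial] at h

/-- Matrix AM-GM: `2 tr (sqrt A) ≤ tr (Γ⁻¹ A) + tr Γ`. -/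
private lemma lower_bound' {k : ℕ} {A : Matrix (Fin k) (Fin k) ℝ} (hA : A.PosSemidef)
    {Γ : Matrix (Fin k) (Fin k) ℝ} (hΓ : Γ.PosDef) :
    2 * hA.sqrt.trace ≤ (Γ⁻¹ * A).trace + Γ.trace := by
  set S := hA.sqrt with hSdef
  have hSS : S * S = A := hA.sqrt_mul_self
  have hSt : Sᵀ = S := psd_transpose_eq hA.posSemidef_sqrt
  set Q := hΓ.posSemidef.sqrt with hQdef
  have hQQ : Q * Q = Γ := hΓ.posSemidef.sqrt_mul_self
  have hQt : Qᵀ = Q := psd_transpose_eq hΓ.posSemidef.posSemidef_sqrt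
  have hStr : 2 * hA.sqrt.trace = 2 * S.trace := rfl
  rw [hStr]
  clear_value S Q
  have hdet : Q.det ≠ 0 := by
    intro h
    have : Γ.det = 0 := by rw [← hQQ, Matrix.det_mul, h, mul_zero]
    exact hΓ.det_pos.ne' this
  have hQiQ : Q⁻¹ * Q = 1 := Matrix.nonsing_inv_mul Q (isUnit_iff_ne_zero.mpr hdet)
  have hQQi : Q * Q⁻¹ = 1 := Matrix.mul_nonsing_inv Q (isUnit_iff_ne_zero.mpr hdet)
  have hGi : Γ⁻¹ = Q⁻¹ * Q⁻¹ := by rw [← hQQ, Matrix.mul_inv_rev]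
  have hQit : (Q⁻¹)ᵀ = Q⁻¹ := by rw [Matrix.transpose_nonsing_inv, hQt]
  set X := Q⁻¹ * S - Q with hXdef
  have hXt : Xᵀ = S * Q⁻¹ - Q := by
    rw [hXdef, Matrix.transpose_sub, Matrix.transpose_mul, hQit, hSt, hQt]
  have hpsd : (Xᵀ * X).PosSemidef := by
    have := Matrix.posSemidef_conjTranspose_mul_self X
    rwa [Matrix.conjTranspose_eq_transpose_of_trivial] at this
  have h0 : 0 ≤ (Xᵀ * X).trace := psd_trace_nonneg' hpsd
  have hexp : Xᵀ * X = S * Q⁻¹ * (Q⁻¹ * S) - S - S + Γ := by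
    rw [hXt, hXdef]
    have h1 : S * Q⁻¹ * Q = S := by rw [Matrix.mul_assoc, hQiQ, Matrix.mul_one]
    have h2 : Q * (Q⁻¹ * S) = S := by rw [← Matrix.mul_assoc, hQQi, Matrix.one_mul]
    rw [Matrix.sub_mul, Matrix.mul_sub, Matrix.mul_sub, h1, h2, hQQ]
    abel
  have htr : (S * Q⁻¹ * (Q⁻¹ * S)).trace = (Γ⁻¹ * A).trace := by
    rw [hGi, ← hSS]
    rw [Matrix.trace_mul_comm (S * Q⁻¹) (Q⁻¹ * S), Matrix.trace_mul_comm (Q⁻¹ * Q⁻¹) (S * S)]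
    have e : Q⁻¹ * S * (S * Q⁻¹) = Q⁻¹ * (S * (S * Q⁻¹)) := by
      simp only [Matrix.mul_assoc]
    rw [e, Matrix.trace_mul_comm Q⁻¹ (S * (S * Q⁻¹))]
    congr 1
    simp only [Matrix.mul_assoc]
  rw [hexp] at h0
  simp only [Matrix.trace_add, Matrix.trace_sub] at h0
  rw [htr] at h0
  linarith

/-- Lemma 1 of the paper (variational formulation of the trace norm): for every real `m × n`
matrix `M`, the infimum over positive definite `Γ` of `½ (tr (Mᵀ Γ⁻¹ M) + tr Γ)` equals
`tr ((M Mᵀ) ^ (1/2))`, the trace norm of `M`. -/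
theorem sInf_trace_norm_variational
    {m n : ℕ} (M : Matrix (Fin m) (Fin n) ℝ) :
    sInf {x : ℝ | ∃ Γ : Matrix (Fin m) (Fin m) ℝ, Γ.PosDef ∧
        x = (1 / 2 : ℝ) * ((Mᵀ * Γ⁻¹ * M).trace + Γ.trace)}
      = (posSemidef_self_mul_transpose M).sqrt.trace := by
  set A := M * Mᵀ with hAdef
  have hA : A.PosSemidef := posSemidef_self_mul_transpose M
  set S := hA.sqrt with hSdef
  have hSS : S * S = A := hA.sqrt_mul_self
  have hSpsd : S.PosSemidef := hA.posSemidef_sqrt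
  set T : Set ℝ := {x : ℝ | ∃ Γ : Matrix (Fin m) (Fin m) ℝ, Γ.PosDef ∧
        x = (1 / 2 : ℝ) * ((Mᵀ * Γ⁻¹ * M).trace + Γ.trace)} with hTdef
  -- rewriting the first trace
  have htrace : ∀ Γ : Matrix (Fin m) (Fin m) ℝ,
      (Mᵀ * Γ⁻¹ * M).trace = (Γ⁻¹ * A).trace := by
    intro Γ
    rw [Matrix.mul_assoc, Matrix.trace_mul_comm, hAdef]
    simp only [Matrix.mul_assoc]
  -- every element of T is at least S.trace
  have hlb : ∀ x ∈ T, S.trace ≤ x := by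
    rintro x ⟨Γ, hΓ, rfl⟩
    have := lower_bound' hA hΓ
    rw [htrace Γ]
    linarith
  have hbdd : BddBelow T := ⟨S.trace, hlb⟩
  have hne : T.Nonempty := by
    refine ⟨(1 / 2 : ℝ) * ((Mᵀ * (1 : Matrix (Fin m) (Fin m) ℝ)⁻¹ * M).trace
      + (1 : Matrix (Fin m) (Fin m) ℝ).trace), 1, Matrix.PosDef.one, rfl⟩
  refine le_antisymm ?_ (le_csInf hne hlb)
  -- upper bound: sInf T ≤ S.trace
  refine le_of_forall_pos_le_add fun ε hε => ?_
  set δ : ℝ := 2 * ε / (m + 1) with hδdef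
  have hδ : 0 < δ := by positivity
  set Γ : Matrix (Fin m) (Fin m) ℝ := S + δ • 1 with hΓdef
  have hδ1 : (δ • (1 : Matrix (Fin m) (Fin m) ℝ)).PosDef := by
    rw [Matrix.smul_one_eq_diagonal]
    exact Matrix.posDef_diagonal_iff.mpr fun _ => hδ
  have hΓ : Γ.PosDef := Matrix.PosDef.posSemidef_add hSpsd hδ1
  have hdet : Γ.det ≠ 0 := hΓ.det_pos.ne'
  have hΓiΓ : Γ⁻¹ * Γ = 1 := Matrix.nonsing_inv_mul Γ (isUnit_iff_ne_zero.mpr hdet)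
  -- Γ⁻¹ * A = S - δ • (Γ⁻¹ * S)
  have hGA : Γ⁻¹ * A = S - δ • (Γ⁻¹ * S) := by
    have h1 : Γ * S = A + δ • S := by
      rw [hΓdef, Matrix.add_mul, Matrix.smul_mul, Matrix.one_mul, hSS]
    have h2 : Γ⁻¹ * (Γ * S) = S := by rw [← Matrix.mul_assoc, hΓiΓ, Matrix.one_mul]
    rw [h1, Matrix.mul_add, Matrix.mul_smul] at h2
    exact eq_sub_of_add_eq h2
  have htS : 0 ≤ (Γ⁻¹ * S).trace := trace_mul_psd_nonneg' hΓ.inv.posSemidef hSpsd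
  have hval : (1 / 2 : ℝ) * ((Mᵀ * Γ⁻¹ * M).trace + Γ.trace) ≤ S.trace + ε := by
    rw [htrace Γ, hGA, hΓdef]
    rw [Matrix.trace_sub, Matrix.trace_smul, Matrix.trace_add, Matrix.trace_smul,
      Matrix.trace_one]
    have hm : (Fintype.card (Fin m) : ℝ) = (m : ℝ) := by simp
    rw [hm]
    have hδm : δ * (m : ℝ) ≤ 2 * ε := by
      rw [hδdef]
      rw [div_mul_eq_mul_div, div_le_iff₀ (by positivity)]
      have : (m : ℝ) ≤ (m : ℝ) + 1 := by linarith
      nlinarith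
    simp only [smul_eq_mul]
    nlinarith [mul_nonneg hδ.le htS]
  have hmem : (1 / 2 : ℝ) * ((Mᵀ * Γ⁻¹ * M).trace + Γ.trace) ∈ T := ⟨Γ, hΓ, rfl⟩
  exact le_trans (csInf_le hbdd hmem) hval
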